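/- For every j ≥ 0, the element f'_j ∈ R' can be written in the form f'_j = Σ_i (a_{i,j}·sⁱtʲ + b_{i,j}·sⁱt^{j−1}·x + c_{i,j}·sⁱt^{j−2}·x²) where the a_{i,j}, b_{i,j}, c_{i,j} are nonnegative integers, only finitely many of which are nonzero; and when j is odd one may take all a_{i,j} = 0, i.e. f'_j = Σ_i (b_{i,j}·sⁱt^{j−1}·x + c_{i,j}·sⁱt^{j−2}·x²) with b_{i,j}, c_{i,j} nonnegative integers. -/

import Mathlib

/-!
The ring `R' = ℤ[s^{±1}, t^{±1}, x] / (x³ = 2t²sx)` is modeled as a quotient of the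
polynomial ring `ℤ[s, s', t, t', x]` (variables indexed by `Fin 5`: `0 ↦ s`, `1 ↦ s⁻¹`,
`2 ↦ t`, `3 ↦ t⁻¹`, `4 ↦ x`) by the ideal generated by `s·s' − 1`, `t·t' − 1` (making `s` and
`t` invertible) and the defining relation `x³ − 2t²sx`.
-/

open MvPolynomial

noncomputable section

def boRel' : Ideal (MvPolynomial (Fin 5) ℤ) :=
  Ideal.span
    { X 0 * X 1 - 1,
      X 2 * X 3 - 1,
      X 4 ^ 3 - 2 * X 2 ^ 2 * X 0 * X 4 }

def R' : Type := MvPolynomial (Fin 5) ℤ ⧸ boRel'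

instance : CommRing R' := inferInstanceAs (CommRing (MvPolynomial (Fin 5) ℤ ⧸ boRel'))

/-- the element `s` of `R'` -/
def s : R' := Ideal.Quotient.mk boRel' (X 0)
/-- the element `s⁻¹` of `R'` -/
def si : R' := Ideal.Quotient.mk boRel' (X 1)
/-- the element `t` of `R'` -/
def t : R' := Ideal.Quotient.mk boRel' (X 2)
/-- the element `t⁻¹` of `R'` -/
def ti : R' := Ideal.Quotient.mk boRel' (X 3)
/-- the element `x` of `R'` -/
def x : R' := Ideal.Quotient.mk boRel' (X 4)

lemma s_mul_si : s * si = 1 := by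
  show Ideal.Quotient.mk boRel' (X 0) * Ideal.Quotient.mk boRel' (X 1) = 1
  rw [← map_mul, ← map_one (Ideal.Quotient.mk boRel'), Ideal.Quotient.mk_eq_mk_iff_sub_mem]
  exact Ideal.subset_span (by simp)

lemma t_mul_ti : t * ti = 1 := by
  show Ideal.Quotient.mk boRel' (X 2) * Ideal.Quotient.mk boRel' (X 3) = 1
  rw [← map_mul, ← map_one (Ideal.Quotient.mk boRel'), Ideal.Quotient.mk_eq_mk_iff_sub_mem]
  exact Ideal.subset_span (by simp)

/-- `s` as a unit of `R'`. -/
def sU : R'ˣ := ⟨s, si, s_mul_si, by rw [mul_comm]; exact s_mul_si⟩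

/-- `t` as a unit of `R'`. -/
def tU : R'ˣ := ⟨t, ti, t_mul_ti, by rw [mul_comm]; exact t_mul_ti⟩

lemma x_cubed : x ^ 3 = 2 * t ^ 2 * s * x := by
  have h : (Ideal.Quotient.mk boRel') ((X 4 : MvPolynomial (Fin 5) ℤ) ^ 3) =
      (Ideal.Quotient.mk boRel') (2 * X 2 ^ 2 * X 0 * X 4) := by
    rw [Ideal.Quotient.mk_eq_mk_iff_sub_mem]
    exact Ideal.subset_span (by simp [boRel'])
  rw [map_pow, map_mul, map_mul, map_mul, map_pow, map_ofNat] at h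
  exact h

/-- Abbreviation for the sums appearing in the reduced form. -/
def S (a : ℤ →₀ ℕ) (e : ℤ) : R' :=
  a.sum fun i n => (n : R') * ((sU ^ i : R'ˣ) : R') * ((tU ^ e : R'ˣ) : R')

lemma S_zero (e : ℤ) : S 0 e = 0 := by simp [S]

lemma S_add (a b : ℤ →₀ ℕ) (e : ℤ) : S (a + b) e = S a e + S b e :=
  Finsupp.sum_add_index' (fun i => by simp) (fun i m n => by push_cast; ring)

lemma S_single (i : ℤ) (n : ℕ) (e : ℤ) :
    S (Finsupp.single i n) e = (n : R') * ((sU ^ i : R'ˣ) : R') * ((tU ^ e : R'ˣ) : R') :=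
  Finsupp.sum_single_index (by simp)

lemma tS (m : ℕ) (a : ℤ →₀ ℕ) (e e' : ℤ) (h : e' = e + m) :
    t ^ m * S a e = S a e' := by
  subst h
  unfold S
  rw [Finsupp.mul_sum]
  refine Finsupp.sum_congr fun i hi => ?_
  have ht : ((tU : R'ˣ) : R') = t := rfl
  rw [zpow_add, Units.val_mul, zpow_natCast, Units.val_pow_eq_pow_val, ht]
  ring

lemma sS (a : ℤ →₀ ℕ) (e : ℤ) :
    s * S a e = S (a.mapDomain (· + 1)) e := by
  unfold S
  rw [Finsupp.mul_sum, Finsupp.sum_mapDomain_index_inj (add_left_injective 1)]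
  refine Finsupp.sum_congr fun i hi => ?_
  have hs : ((sU : R'ˣ) : R') = s := rfl
  rw [zpow_add, zpow_one, Units.val_mul, hs]
  ring

lemma tsS (m : ℕ) (a : ℤ →₀ ℕ) (e e' : ℤ) (h : e' = e + m) :
    t ^ m * s * S a e = S (a.mapDomain (· + 1)) e' := by
  rw [mul_assoc, sS, tS m _ e e' h]

lemma aux (f : ℕ → R') (h0 : f 0 = 1) (h1 : f 1 = x)
    (hodd : ∀ j : ℕ, 1 ≤ j → f (2 * j + 1) = t ^ j * x * f j)
    (heven : ∀ j : ℕ, 1 ≤ j → f (2 * j) = t ^ j * f j + t ^ (j + 1) * s * f (j - 1)) :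
    ∀ j : ℕ, ∃ a b c : ℤ →₀ ℕ,
      f j = S a j + S b ((j : ℤ) - 1) * x + S c ((j : ℤ) - 2) * x ^ 2 ∧ (Odd j → a = 0) := by
  intro j
  induction j using Nat.strong_induction_on with
  | _ j ih =>
    match j with
    | 0 =>
      refine ⟨Finsupp.single 0 1, 0, 0, ?_, by intro h; rw [Nat.odd_iff] at h; omega⟩
      rw [h0, S_single, S_zero, S_zero]
      simp
    | 1 =>
      refine ⟨0, Finsupp.single 0 1, 0, ?_, fun _ => rfl⟩
      rw [h1, S_single, S_zero, S_zero]
      norm_num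
    | (n + 2) =>
      rcases Nat.even_or_odd (n + 2) with ⟨k, hk⟩ | ⟨k, hk⟩
      · -- even case : n + 2 = 2 * k, k ≥ 1
        have hk1 : 1 ≤ k := by omega
        obtain ⟨a1, b1, c1, h1', -⟩ := ih k (by omega)
        obtain ⟨a2, b2, c2, h2', -⟩ := ih (k - 1) (by omega)
        refine ⟨a1 + a2.mapDomain (· + 1), b1 + b2.mapDomain (· + 1),
          c1 + c2.mapDomain (· + 1), ?_, by intro h; rw [Nat.odd_iff] at h; omega⟩
        rw [show n + 2 = 2 * k from by omega, heven k hk1, h1', h2',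
          S_add, S_add, S_add,
          ← tS k a1 (k : ℤ) ((2 * k : ℕ) : ℤ) (by omega),
          ← tS k b1 ((k : ℤ) - 1) (((2 * k : ℕ) : ℤ) - 1) (by omega),
          ← tS k c1 ((k : ℤ) - 2) (((2 * k : ℕ) : ℤ) - 2) (by omega),
          ← tsS (k + 1) a2 ((k - 1 : ℕ) : ℤ) (((2 * k : ℕ) : ℤ)) (by omega),
          ← tsS (k + 1) b2 (((k - 1 : ℕ) : ℤ) - 1) (((2 * k : ℕ) : ℤ) - 1) (by omega),
          ← tsS (k + 1) c2 (((k - 1 : ℕ) : ℤ) - 2) (((2 * k : ℕ) : ℤ) - 2) (by omega)]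
        ring
      · -- odd case : n + 2 = 2 * k + 1, k ≥ 1
        have hk1 : 1 ≤ k := by omega
        obtain ⟨a1, b1, c1, h1', -⟩ := ih k (by omega)
        refine ⟨0, a1 + (c1.mapDomain (· + 1) + c1.mapDomain (· + 1)), b1, ?_, fun _ => rfl⟩
        rw [show n + 2 = 2 * k + 1 from by omega, hodd k hk1, h1',
          S_zero, S_add, S_add,
          ← tS k a1 (k : ℤ) (((2 * k + 1 : ℕ) : ℤ) - 1) (by omega),
          ← tsS (k + 2) c1 ((k : ℤ) - 2) (((2 * k + 1 : ℕ) : ℤ) - 1) (by omega),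
          ← tS k b1 ((k : ℤ) - 1) (((2 * k + 1 : ℕ) : ℤ) - 2) (by omega)]
        linear_combination (t ^ k * S c1 ((k : ℤ) - 2)) * x_cubed

/-- For every `j ≥ 0`, the element `f'_j ∈ R'` (defined recursively by `f'₀ = 1`, `f'₁ = x`,
`f'_{2j+1} = tʲ·x·f'_j` for `j ≥ 1` and `f'_{2j} = tʲ·f'_j + t^{j+1}·s·f'_{j−1}` for `j ≥ 1`)
can be written as `f'_j = Σ_i (a_{i,j}·sⁱtʲ + b_{i,j}·sⁱt^{j−1}·x + c_{i,j}·sⁱt^{j−2}·x²)`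
with the `a_{i,j}, b_{i,j}, c_{i,j}` nonnegative integers, only finitely many nonzero;
moreover when `j` is odd one may take all `a_{i,j} = 0`. -/
theorem f'_reduced_form (f : ℕ → R') (h0 : f 0 = 1) (h1 : f 1 = x)
    (hodd : ∀ j : ℕ, 1 ≤ j → f (2 * j + 1) = t ^ j * x * f j)
    (heven : ∀ j : ℕ, 1 ≤ j → f (2 * j) = t ^ j * f j + t ^ (j + 1) * s * f (j - 1)) :
    ∀ j : ℕ, ∃ a b c : ℤ →₀ ℕ,
      f j =
        (a.sum fun i n => (n : R') * ((sU ^ i : R'ˣ) : R') * ((tU ^ (j : ℤ) : R'ˣ) : R'))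
        + (b.sum fun i n =>
            (n : R') * ((sU ^ i : R'ˣ) : R') * ((tU ^ ((j : ℤ) - 1) : R'ˣ) : R') * x)
        + (c.sum fun i n =>
            (n : R') * ((sU ^ i : R'ˣ) : R') * ((tU ^ ((j : ℤ) - 2) : R'ˣ) : R') * x ^ 2)
      ∧ (Odd j → a = 0) := by
  intro j
  obtain ⟨a, b, c, h, ho⟩ := aux f h0 h1 hodd heven j
  exact ⟨a, b, c, by simpa [S, Finsupp.sum_mul] using h, ho⟩

end
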